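/- For every positive integer D, there exists a base class F ⊆ {0,1}^{ {0,1}* } with Littlestone dimension exactly D and VC dimension exactly 1, such that for every T > D the end-to-end class F^{e2e(T)} has VC dimension exactly D. -/

import Mathlib

def applyAppend (f : List Bool → Bool) (x : List Bool) : List Bool := x ++ [f x]

def cot (f : List Bool → Bool) (T : ℕ) (x : List Bool) : List Bool :=
  (applyAppend f)^[T] x

def e2e (f : List Bool → Bool) (T : ℕ) (x : List Bool) : Bool :=
  (cot f T x).getLastD false

def e2eClass (F : Set (List Bool → Bool)) (T : ℕ) : Set (List Bool → Bool) :=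
  (fun f => e2e f T) '' F

def Shatters {X : Type*} (H : Set (X → Bool)) (d : ℕ) : Prop :=
  ∃ x : Fin d → X, ∀ b : Fin d → Bool, ∃ h ∈ H, ∀ i, h (x i) = b i

/-- Littlestone (online) shattering of a complete binary tree of depth `d`. -/
def LShatters {X : Type*} (F : Set (X → Bool)) (d : ℕ) : Prop :=
  ∃ x : (i : Fin d) → (Fin i.1 → Bool) → X,
    ∀ ε : Fin d → Bool, ∃ f ∈ F, ∀ i : Fin d,
      f (x i (fun j => ε ⟨j.1, j.2.trans i.2⟩)) = ε i

/-! ### Auxiliary definitions and lemmas -/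

def msbVal (l : List Bool) : ℕ := l.foldl (fun a b => 2*a + b.toNat) 0

lemma msbVal_foldl (l : List Bool) (a : ℕ) :
    l.foldl (fun a b => 2*a + b.toNat) a = a * 2^l.length + msbVal l := by
  induction l generalizing a with
  | nil => simp [msbVal]
  | cons b l ih =>
    simp only [msbVal, List.foldl_cons]
    rw [ih, ih, List.length_cons, pow_succ]
    ring

lemma msbVal_append (l₁ l₂ : List Bool) :
    msbVal (l₁ ++ l₂) = msbVal l₁ * 2^l₂.length + msbVal l₂ := by
  simp only [msbVal, List.foldl_append]
  rw [msbVal_foldl]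
  rfl

lemma msbVal_concat (l : List Bool) (b : Bool) :
    msbVal (l ++ [b]) = 2 * msbVal l + b.toNat := by
  rw [msbVal_append]
  simp [msbVal]
  ring

lemma msbVal_lt (l : List Bool) : msbVal l < 2^l.length := by
  induction l with
  | nil => simp [msbVal]
  | cons b l ih =>
    have h : msbVal (b :: l) = b.toNat * 2^l.length + msbVal l := by
      simp only [msbVal, List.foldl_cons]
      rw [msbVal_foldl]
      simp [msbVal]
    rw [h, List.length_cons, pow_succ]
    have : b.toNat ≤ 1 := Bool.toNat_le b
    nlinarith

lemma msbVal_replicate_false (k : ℕ) : msbVal (List.replicate k false) = 0 := by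
  induction k with
  | zero => simp [msbVal]
  | succ k ih =>
    rw [List.replicate_succ]
    simp only [msbVal, List.foldl_cons]
    rw [msbVal_foldl]
    simpa [msbVal] using ih

lemma msbVal_take (l : List Bool) (t : ℕ) (_ht : t ≤ l.length) :
    msbVal (l.take t) = msbVal l / 2^(l.length - t) := by
  have h1 : msbVal (l.drop t) < 2^(l.length - t) := by
    have := msbVal_lt (l.drop t); simpa using this
  have key : msbVal l = msbVal (l.take t) * 2^(l.length - t) + msbVal (l.drop t) := by
    conv_lhs => rw [← List.take_append_drop t l]
    rw [msbVal_append, List.length_drop]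
  rw [key, Nat.add_comm, Nat.add_mul_div_right _ _ (pow_pos two_pos _),
    Nat.div_eq_of_lt h1, Nat.zero_add]

lemma step_iff (n e : ℕ) : ((2 * (n / 2^(e+1)) + 1) * 2^e ≤ n) ↔ ((n / 2^e) % 2 = 1) := by
  set m := n / 2^e with hm
  have h1 : n / 2^(e+1) = m / 2 := by
    rw [hm, pow_succ, ← Nat.div_div_eq_div_mul]
  have h2 : m * 2^e ≤ n := by rw [hm]; exact Nat.div_mul_le_self n (2^e)
  have hmod : n % 2^e < 2^e := Nat.mod_lt _ (pow_pos two_pos e)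
  have hdm2 : 2^e * m + n % 2^e = n := by rw [hm]; exact Nat.div_add_mod n (2^e)
  have e1 : (m+1)*2^e = 2^e*m + 2^e := by ring
  have h3 : n < (m+1) * 2^e := by linarith
  rw [h1]
  have hdm := Nat.div_add_mod m 2
  rcases Nat.mod_two_eq_zero_or_one m with h0 | h0
  · rw [h0]
    have h : 2 * (m/2) + 1 = m + 1 := by omega
    rw [h]
    simp only [Nat.not_le.mpr h3, false_iff]
    omega
  · rw [h0]
    have h : 2 * (m/2) + 1 = m := by omega
    rw [h]
    simp [h2]

lemma msbVal_extract (l : List Bool) (i : ℕ) (hi : i < l.length) :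
    (msbVal l / 2 ^ (l.length - 1 - i)) % 2 = (l.getD i false).toNat := by
  have h1 : msbVal (l.take (i+1)) = msbVal l / 2^(l.length - (i+1)) := msbVal_take l (i+1) hi
  have h2 : l.length - (i+1) = l.length - 1 - i := by omega
  rw [← h2, ← h1]
  have h3 : l.take (i+1) = l.take i ++ [l.getD i false] := by
    rw [List.take_succ, List.getElem?_eq_getElem hi, List.getD_eq_getElem l false hi]
    simp
  rw [h3, msbVal_concat, Nat.mul_add_mod]
  have : (l.getD i false).toNat ≤ 1 := Bool.toNat_le _
  omega

def myQuery (D : ℕ) (x : List Bool) : ℕ :=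
  if x.headD true = true then msbVal x.tail
  else
    let rest := x.tail
    let i := rest.findIdx (fun b => b)
    let s := rest.drop (i+1)
    if s.length < D then msbVal (s ++ [true]) * 2 ^ (D - s.length - 1)
    else if s.getD i false = true then 0 else msbVal (s.take D) + 1

def thr (D n : ℕ) : List Bool → Bool := fun x => decide (myQuery D x ≤ n)

lemma findIdx_rep (i : ℕ) (s : List Bool) :
    (List.replicate i false ++ true :: s).findIdx (fun b => b) = i := by
  induction i with
  | zero => simp [List.findIdx_cons]
  | succ k ih => simpa [List.replicate_succ, List.findIdx_cons] using ih

lemma drop_rep (i : ℕ) (s : List Bool) :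
    (List.replicate i false ++ true :: s).drop (i+1) = s := by
  have h : List.replicate i false ++ true :: s = (List.replicate i false ++ [true]) ++ s := by
    simp
  rw [h, List.drop_left' (by simp)]

lemma myQuery_point (D i : ℕ) (s : List Bool) :
    myQuery D (false :: (List.replicate i false ++ true :: s)) =
      if s.length < D then msbVal (s ++ [true]) * 2 ^ (D - s.length - 1)
      else if s.getD i false = true then 0 else msbVal (s.take D) + 1 := by
  simp only [myQuery, List.headD_cons, List.tail_cons, findIdx_rep, drop_rep]
  simp

def expList (D n i t : ℕ) : List Bool :=
  List.ofFn (fun j : Fin t =>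
    if j.1 < D then decide ((n / 2^(D-1-j.1)) % 2 = 1) else decide ((n / 2^(D-1-i)) % 2 = 1))

lemma expList_succ (D n i t : ℕ) :
    expList D n i (t+1) = expList D n i t ++
      [if t < D then decide ((n / 2^(D-1-t)) % 2 = 1) else decide ((n / 2^(D-1-i)) % 2 = 1)] := by
  simp only [expList, List.ofFn_succ']
  simp [Fin.last, List.concat_eq_append]

lemma expList_length (D n i t : ℕ) : (expList D n i t).length = t := by
  simp [expList]

lemma msbVal_expList (D n i : ℕ) (hn : n < 2^D) (t : ℕ) (ht : t ≤ D) :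
    msbVal (expList D n i t) = n / 2^(D-t) := by
  induction t with
  | zero =>
    simp [expList, msbVal, Nat.div_eq_of_lt hn]
  | succ t ih =>
    have ht' : t < D := ht
    rw [expList_succ, if_pos ht', msbVal_concat, ih (le_of_lt ht')]
    have he : D - t = (D - 1 - t) + 1 := by omega
    set e := D - 1 - t with hedef
    have he2 : D - (t+1) = e := by omega
    rw [he, he2]
    set m := n / 2^e with hm
    have h1 : n / 2^(e+1) = m / 2 := by rw [hm, pow_succ, ← Nat.div_div_eq_div_mul]
    rw [h1]
    rcases Nat.mod_two_eq_zero_or_one m with h0 | h0 <;> simp [h0] <;> omega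

lemma expList_take (D n i t : ℕ) (h : D ≤ t) :
    (expList D n i t).take D = expList D n i D := by
  apply List.ext_getElem
  · simp [expList]; omega
  · intro j h1 h2
    have hjD : j < D := by simpa [expList_length] using h2
    simp [expList, List.getElem_take, hjD]

lemma expList_getD (D n i t j : ℕ) (hj : j < t) :
    (expList D n i t).getD j false =
      (if j < D then decide ((n / 2^(D-1-j)) % 2 = 1)
       else decide ((n / 2^(D-1-i)) % 2 = 1)) := by
  rw [List.getD_eq_getElem _ false (by simpa [expList_length] using hj)]
  simp [expList]

lemma thr_step (D n i t : ℕ) (hi : i < D) (hn : n < 2^D) :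
    thr D n (false :: (List.replicate i false ++ true :: expList D n i t)) =
      (if t < D then decide ((n / 2^(D-1-t)) % 2 = 1)
       else decide ((n / 2^(D-1-i)) % 2 = 1)) := by
  unfold thr
  rw [myQuery_point, expList_length]
  by_cases ht : t < D
  · rw [if_pos ht, if_pos ht]
    rw [msbVal_concat, msbVal_expList D n i hn t (le_of_lt ht)]
    have he : D - t = (D - 1 - t) + 1 := by omega
    have he2 : D - t - 1 = D - 1 - t := by omega
    rw [he2, he]
    exact decide_eq_decide.mpr (step_iff n (D-1-t))
  · have htD : D ≤ t := le_of_not_gt ht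
    rw [if_neg ht, if_neg ht]
    rw [expList_getD D n i t i (lt_of_lt_of_le hi htD), if_pos hi]
    by_cases hb : (n / 2^(D-1-i)) % 2 = 1
    · simp [hb]
    · simp only [hb, decide_false]
      rw [if_neg (by simp)]
      rw [expList_take D n i t htD, msbVal_expList D n i hn D le_rfl]
      simp [hb]

lemma cot_point (D n i : ℕ) (hi : i < D) (hn : n < 2^D) (t : ℕ) :
    cot (thr D n) t (false :: (List.replicate i false ++ [true])) =
      false :: (List.replicate i false ++ true :: expList D n i t) := by
  induction t with
  | zero =>
    simp [cot, expList]
  | succ t ih =>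
    unfold cot at ih ⊢
    rw [Function.iterate_succ_apply', ih]
    unfold applyAppend
    rw [thr_step D n i t hi hn, expList_succ]
    simp

lemma e2e_point (D n i T : ℕ) (hi : i < D) (hn : n < 2^D) (hT : D < T) :
    e2e (thr D n) T (false :: (List.replicate i false ++ [true])) =
      decide ((n / 2^(D-1-i)) % 2 = 1) := by
  unfold e2e
  rw [cot_point D n i hi hn T]
  have hT1 : T = (T-1) + 1 := by omega
  rw [hT1, expList_succ, if_neg (by omega)]
  have h : false :: (List.replicate i false ++ true ::
      (expList D n i (T-1) ++ [decide ((n / 2^(D-1-i)) % 2 = 1)])) =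
      (false :: (List.replicate i false ++ true :: expList D n i (T-1))) ++
        [decide ((n / 2^(D-1-i)) % 2 = 1)] := by
    simp
  rw [h, List.getLastD_concat]

lemma shatters_le {X : Type*} {H : Set (X → Bool)} {d Dc : ℕ} (g : ℕ → X → Bool)
    (hH : ∀ h ∈ H, ∃ n, n < 2^Dc ∧ g n = h) (hs : Shatters H d) : d ≤ Dc := by
  classical
  obtain ⟨x, hx⟩ := hs
  have h1 : ∀ b : Fin d → Bool, ∃ n : Fin (2^Dc), ∀ i, g n.1 (x i) = b i := by
    intro b
    obtain ⟨h, hh, hb⟩ := hx b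
    obtain ⟨n, hn, rfl⟩ := hH h hh
    exact ⟨⟨n, hn⟩, hb⟩
  choose m hm using h1
  have hinj : Function.Injective m := by
    intro b b' hbb
    funext i
    have h2 := hm b i
    rw [hbb] at h2
    rw [← h2, hm b' i]
  have hcard := Fintype.card_le_of_injective m hinj
  simp only [Fintype.card_fun, Fintype.card_fin, Fintype.card_bool] at hcard
  exact (Nat.pow_le_pow_iff_right (by norm_num : 1 < 2)).1 hcard

lemma lshatters_le {X : Type*} {H : Set (X → Bool)} {d Dc : ℕ} (g : ℕ → X → Bool)
    (hH : ∀ h ∈ H, ∃ n, n < 2^Dc ∧ g n = h) (hs : LShatters H d) : d ≤ Dc := by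
  classical
  obtain ⟨x, hx⟩ := hs
  have h1 : ∀ ε : Fin d → Bool, ∃ n : Fin (2^Dc),
      ∀ i : Fin d, g n.1 (x i (fun j => ε ⟨j.1, j.2.trans i.2⟩)) = ε i := by
    intro ε
    obtain ⟨f, hf, hb⟩ := hx ε
    obtain ⟨n, hn, rfl⟩ := hH f hf
    exact ⟨⟨n, hn⟩, hb⟩
  choose m hm using h1
  have hinj : Function.Injective m := by
    intro ε ε' hee
    by_contra hne
    obtain ⟨i0, hi0⟩ := Function.ne_iff.1 hne
    have hne' : (Finset.univ.filter fun i => ε i ≠ ε' i).Nonempty := ⟨i0, by simp [hi0]⟩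
    set i := Finset.min' _ hne' with hidef
    have hiP : ε i ≠ ε' i := by
      have := Finset.min'_mem _ hne'
      simpa using this
    have hagree : (fun j : Fin i.1 => ε ⟨j.1, j.2.trans i.2⟩) =
        (fun j : Fin i.1 => ε' ⟨j.1, j.2.trans i.2⟩) := by
      funext j
      by_contra hj
      have hmem : (⟨j.1, j.2.trans i.2⟩ : Fin d) ∈
          Finset.univ.filter (fun i => ε i ≠ ε' i) := by simp [hj]
      have hle := Finset.min'_le _ _ hmem
      have hlt : (⟨j.1, j.2.trans i.2⟩ : Fin d) < i := by
        simpa [Fin.lt_def] using j.2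
      exact absurd hle (not_le.mpr hlt)
    have e1 := hm ε i
    have e2 := hm ε' i
    rw [hee, hagree] at e1
    exact hiP (e1.symm.trans e2)
  have hcard := Fintype.card_le_of_injective m hinj
  simp only [Fintype.card_fun, Fintype.card_fin, Fintype.card_bool] at hcard
  exact (Nat.pow_le_pow_iff_right (by norm_num : 1 < 2)).1 hcard

lemma vc_le_one (D : ℕ) : ∀ d, Shatters (thr D '' Set.Iio (2^D)) d → d ≤ 1 := by
  intro d hs
  by_contra hd
  push_neg at hd
  obtain ⟨x, hx⟩ := hs
  have h0 : 0 < d := by omega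
  have h1 : 1 < d := hd
  rcases le_total (myQuery D (x ⟨0, h0⟩)) (myQuery D (x ⟨1, h1⟩)) with hle | hle
  · obtain ⟨h, hh, hb⟩ := hx (fun j => decide (j.1 = 1))
    obtain ⟨n, hn, rfl⟩ := hh
    have e0 := hb ⟨0, h0⟩
    have e1 := hb ⟨1, h1⟩
    simp [thr] at e0 e1
    omega
  · obtain ⟨h, hh, hb⟩ := hx (fun j => decide (j.1 = 0))
    obtain ⟨n, hn, rfl⟩ := hh
    have e0 := hb ⟨0, h0⟩
    have e1 := hb ⟨1, h1⟩
    simp [thr] at e0 e1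
    omega

lemma shatters_one (D : ℕ) (hD : 0 < D) : Shatters (thr D '' Set.Iio (2^D)) 1 := by
  refine ⟨fun _ => [true, true], ?_⟩
  intro b
  cases hb : b ⟨0, one_pos⟩ with
  | false =>
    refine ⟨thr D 0, ⟨0, Set.mem_Iio.mpr (by positivity), rfl⟩, ?_⟩
    intro i
    have hi : i = ⟨0, one_pos⟩ := Subsingleton.elim _ _
    rw [hi, hb]
    simp [thr, myQuery, msbVal]
  | true =>
    refine ⟨thr D 1, ⟨1, Set.mem_Iio.mpr (Nat.one_lt_two_pow_iff.mpr (by omega)), rfl⟩, ?_⟩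
    intro i
    have hi : i = ⟨0, one_pos⟩ := Subsingleton.elim _ _
    rw [hi, hb]
    simp [thr, myQuery, msbVal]

lemma lshatters_D (D : ℕ) : LShatters (thr D '' Set.Iio (2^D)) D := by
  classical
  refine ⟨fun i ε' => true :: (List.ofFn ε' ++ true :: List.replicate (D-1-i.1) false), ?_⟩
  intro ε
  set n := msbVal (List.ofFn ε) with hndef
  have hlen : (List.ofFn ε).length = D := by simp
  have hn : n < 2^D := by
    have := msbVal_lt (List.ofFn ε); rwa [hlen] at this
  refine ⟨thr D n, ⟨n, hn, rfl⟩, ?_⟩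
  intro i
  unfold thr
  have htake : List.ofFn (fun j : Fin i.1 => ε ⟨j.1, j.2.trans i.2⟩) = (List.ofFn ε).take i.1 := by
    apply List.ext_getElem
    · simp [List.length_take]
    · intro j hj1 hj2
      simp [List.getElem_take]
  have hq : myQuery D (true :: (List.ofFn (fun j : Fin i.1 => ε ⟨j.1, j.2.trans i.2⟩) ++
      true :: List.replicate (D-1-i.1) false)) =
      (2 * (n / 2^((D-1-i.1)+1)) + 1) * 2^(D-1-i.1) := by
    simp only [myQuery, List.headD_cons, List.tail_cons, if_pos rfl]
    have hsplit : List.ofFn (fun j : Fin i.1 => ε ⟨j.1, j.2.trans i.2⟩) ++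
        true :: List.replicate (D-1-i.1) false =
        (List.ofFn (fun j : Fin i.1 => ε ⟨j.1, j.2.trans i.2⟩) ++ [true]) ++
          List.replicate (D-1-i.1) false := by simp
    rw [hsplit, msbVal_append, msbVal_replicate_false, msbVal_concat, htake,
      msbVal_take _ _ (by simp [le_of_lt i.2]), hlen]
    have he : D - i.1 = (D - 1 - i.1) + 1 := by omega
    rw [he]
    simp
    rw [hndef]
  rw [hq]
  have hx := msbVal_extract (List.ofFn ε) i.1 (by simp [i.2])
  rw [hlen, ← hndef] at hx
  have hg : (List.ofFn ε).getD i.1 false = ε i := by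
    rw [List.getD_eq_getElem _ _ (by simp [i.2])]
    simp
  rw [hg] at hx
  have hiff := step_iff n (D-1-i.1)
  cases hεi : ε i with
  | false =>
    rw [hεi] at hx
    simp only [Bool.toNat_false] at hx
    simp only [decide_eq_false_iff_not]
    rw [hiff]
    omega
  | true =>
    rw [hεi] at hx
    simp only [Bool.toNat_true] at hx
    simp only [decide_eq_true_eq]
    rw [hiff]
    omega

lemma shatters_e2e (D T : ℕ) (hT : D < T) :
    Shatters (e2eClass (thr D '' Set.Iio (2^D)) T) D := by
  refine ⟨fun i => false :: (List.replicate i.1 false ++ [true]), ?_⟩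
  intro b
  set n := msbVal (List.ofFn b) with hndef
  have hlen : (List.ofFn b).length = D := by simp
  have hn : n < 2^D := by
    have := msbVal_lt (List.ofFn b); rwa [hlen] at this
  refine ⟨e2e (thr D n) T, ⟨thr D n, ⟨n, hn, rfl⟩, rfl⟩, ?_⟩
  intro i
  rw [e2e_point D n i.1 T i.2 hn hT]
  have hx := msbVal_extract (List.ofFn b) i.1 (by simp [i.2])
  rw [hlen, ← hndef] at hx
  have hg : (List.ofFn b).getD i.1 false = b i := by
    rw [List.getD_eq_getElem _ _ (by simp [i.2])]
    simp
  rw [hg] at hx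
  cases hbi : b i with
  | false =>
    rw [hbi] at hx
    simp only [Bool.toNat_false] at hx
    simp [hx]
  | true =>
    rw [hbi] at hx
    simp only [Bool.toNat_true] at hx
    simp [hx]

/-- for every `D ≥ 1` there is a base class `F` with Littlestone
dimension exactly `D` and VC dimension exactly `1`, such that for every `T > D`
the end-to-end class `F^{e2e(T)}` has VC dimension exactly `D`. -/
theorem exists_baseClass_ldim_vc (D : ℕ) (hD : 0 < D) :
    ∃ F : Set (List Bool → Bool),
      (LShatters F D ∧ ∀ d, LShatters F d → d ≤ D) ∧
      (Shatters F 1 ∧ ∀ d, Shatters F d → d ≤ 1) ∧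
      (∀ T, D < T →
        Shatters (e2eClass F T) D ∧ ∀ d, Shatters (e2eClass F T) d → d ≤ D) := by
  refine ⟨thr D '' Set.Iio (2^D), ⟨lshatters_D D, ?_⟩, ⟨shatters_one D hD, vc_le_one D⟩, ?_⟩
  · intro d hs
    exact lshatters_le (thr D) (by rintro f ⟨n, hn, rfl⟩; exact ⟨n, hn, rfl⟩) hs
  · intro T hT
    refine ⟨shatters_e2e D T hT, ?_⟩
    intro d hs
    exact shatters_le (fun n => e2e (thr D n) T)
      (by rintro h ⟨f, ⟨n, hn, rfl⟩, rfl⟩; exact ⟨n, hn, rfl⟩) hs
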